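/- Let K be a finite field, F a subfield of K, q = |F|, d = [K : F], and r a natural number with gcd(r, d) = 1. The F-linear map φ : K → K defined by φ(t) = t^{q^r} − t has kernel equal to F, and its image equals the kernel of the trace map Tr_{K/F} : K → F. In particular, every element of K whose trace to F is zero is of the form t^{q^r} − t for some t ∈ K. -/

import Mathlib

section AuxiliaryLemmas

private lemma stmt_11_iter_fix {K : Type*} [Monoid K] (x : K) (s : ℕ) (h : x ^ s = x) :
    ∀ a : ℕ, x ^ s ^ a = x := by
  intro a
  induction a with
  | zero => simp
  | succ n ih => rw [pow_succ, pow_mul, ih, h]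

private lemma stmt_11_bezout_nat {r d : ℕ} (hr : 0 < r) (h : Nat.gcd r d = 1) :
    ∃ a b : ℕ, r * a = 1 + d * b := by
  rcases Nat.lt_or_ge d 2 with hd | hd
  · interval_cases d
    · rw [Nat.gcd_zero_right] at h; exact ⟨1, 0, by omega⟩
    · exact ⟨1, r - 1, by omega⟩
  · obtain ⟨m, -, hm⟩ := Nat.exists_mul_mod_eq_one_of_coprime h hd
    exact ⟨m, r * m / d, by have := Nat.div_add_mod (r * m) d; omega⟩

end AuxiliaryLemmas

set_option maxHeartbeats 2000000 in
/-- Let `K` be a finite field, `F` a subfield, `q = |F|`, `d = [K : F]`, and `r` a natural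
number with `gcd(r, d) = 1`. The `F`-linear map `φ : K → K`, `φ(t) = t^(q^r) - t`, has kernel
equal to `F` and image equal to the kernel of the trace map `Tr_{K/F} : K → F`; in particular
every element of `K` of trace zero is of the form `t^(q^r) - t`. -/
theorem stmt_11 {K : Type*} [Field K] [Finite K] (F : Subfield K)
    (q d r : ℕ) (hq : q = Nat.card F) (hd : d = Module.finrank F K)
    (hr : Nat.gcd r d = 1) :
    (∀ t : K, t ^ q ^ r - t = 0 ↔ t ∈ F) ∧
    (∀ y : K, (∃ t : K, t ^ q ^ r - t = y) ↔ Algebra.trace F K y = 0) := by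
  classical
  have : Fintype K := Fintype.ofFinite K
  have : Fintype F := Fintype.ofFinite F
  have hqF : q = Fintype.card F := by rw [hq, Nat.card_eq_fintype_card]
  have hq2 : 1 < q := hqF ▸ Fintype.one_lt_card
  -- every element of F satisfies x ^ q = x
  have hFfix : ∀ x : K, x ∈ F → x ^ q = x := by
    intro x hx
    have : (⟨x, hx⟩ : F) ^ q = ⟨x, hx⟩ := by rw [hqF]; exact FiniteField.pow_card _
    simpa using congrArg (Subtype.val) this
  -- conversely, every solution of x ^ q = x lies in F (root counting)
  have hfixF : ∀ x : K, x ^ q = x → x ∈ F := by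
    intro x hx
    have hPne : (Polynomial.X ^ q - Polynomial.X : Polynomial K) ≠ 0 :=
      FiniteField.X_pow_card_sub_X_ne_zero K hq2
    set Z : Finset K := (Polynomial.X ^ q - Polynomial.X : Polynomial K).roots.toFinset with hZ
    have hcardZ : Z.card ≤ q := by
      calc Z.card ≤ Multiset.card (Polynomial.X ^ q - Polynomial.X : Polynomial K).roots :=
            Multiset.toFinset_card_le _
        _ ≤ _ := (Polynomial.card_roots' _).trans_eq
            (FiniteField.X_pow_card_sub_X_natDegree_eq K hq2)
    have hmemZ : ∀ y : K, y ∈ Z ↔ y ^ q = y := by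
      intro y
      rw [hZ, Multiset.mem_toFinset, Polynomial.mem_roots hPne, Polynomial.IsRoot.def]
      simp [sub_eq_zero]
    set FF : Finset K := Set.toFinset (F : Set K) with hFF
    have hsub : FF ⊆ Z := by
      intro y hy
      rw [hFF, Set.mem_toFinset] at hy
      exact (hmemZ y).mpr (hFfix y hy)
    have hcardFF : q ≤ FF.card := by
      rw [hFF, Set.toFinset_card, hqF]
      apply le_of_eq
      exact Fintype.card_congr (Equiv.refl _)
    have : FF = Z := Finset.eq_of_subset_of_card_le hsub (hcardZ.trans hcardFF)
    have hxZ : x ∈ Z := (hmemZ x).mpr hx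
    rw [← this, hFF, Set.mem_toFinset] at hxZ
    exact hxZ
  -- x ^ (q ^ d) = x for all x in K
  have hdpos : 0 < d := hd ▸ Module.finrank_pos
  have hcardK : Fintype.card K = q ^ d := by
    rw [hqF, hd]; exact Module.card_eq_pow_finrank
  have hKfix : ∀ x : K, x ^ q ^ d = x := by
    intro x; rw [← hcardK]; exact FiniteField.pow_card x
  -- the fixed points of the r-th Frobenius iterate are exactly F
  have key1 : ∀ t : K, t ^ q ^ r = t ↔ t ∈ F := by
    intro t
    constructor
    · intro h
      rcases Nat.eq_zero_or_pos r with hr0 | hrpos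
      · have hd1 : d = 1 := by rw [hr0] at hr; simpa using hr
        have h2 := hKfix t
        rw [hd1, pow_one] at h2
        exact hfixF t h2
      · obtain ⟨a, b, hab⟩ := stmt_11_bezout_nat hrpos hr
        have h1 : t ^ q ^ (r * a) = t := by
          rw [pow_mul]; exact stmt_11_iter_fix t (q ^ r) h a
        have h3 : t ^ q ^ (d * b) = t := by
          rw [pow_mul]; exact stmt_11_iter_fix t (q ^ d) (hKfix t) b
        have h2 : t ^ q ^ (1 + d * b) = t ^ q := by
          rw [pow_add, pow_one, mul_comm, pow_mul, h3]
        apply hfixF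
        rw [← h2, ← hab, h1]
    · intro ht
      exact stmt_11_iter_fix t q (hFfix t ht) r
  -- characteristic facts
  haveI : CharP F (ringChar F) := ringChar.charP F
  set p := ringChar F with hp'
  obtain ⟨n, hp, hcard⟩ := FiniteField.card F p
  haveI : Fact p.Prime := ⟨hp⟩
  haveI : CharP K p := charP_of_injective_ringHom F.subtype.injective p
  haveI : ExpChar K p := ExpChar.prime hp
  have hqp : q = p ^ (n : ℕ) := hqF.trans hcard
  have hqr : q ^ r = p ^ ((n : ℕ) * r) := by rw [hqp, ← pow_mul]
  -- the Frobenius iterate as an F-algebra equivalence of K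
  let σ : K →ₐ[F] K :=
    { toRingHom := iterateFrobenius K p ((n : ℕ) * r)
      commutes' := fun c => by
        show iterateFrobenius K p ((n : ℕ) * r) (algebraMap F K c) = algebraMap F K c
        rw [iterateFrobenius_def, ← hqr]
        exact (key1 _).mpr (by exact c.2) }
  have hσ : ∀ x : K, σ x = x ^ q ^ r := fun x => by
    show iterateFrobenius K p ((n : ℕ) * r) x = _
    rw [iterateFrobenius_def, ← hqr]
  have hbij : Function.Bijective σ :=
    Finite.injective_iff_bijective.mp σ.toRingHom.injective
  let e : K ≃ₐ[F] K := AlgEquiv.ofBijective σ hbij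
  have he : ∀ x : K, e x = x ^ q ^ r := hσ
  -- the linear map φ
  haveI : FiniteDimensional F K := ⟨⟨Finset.univ, by rw [Finset.coe_univ, Submodule.span_univ]⟩⟩
  let φ : K →ₗ[F] K := e.toLinearMap - LinearMap.id
  have hφ : ∀ t : K, φ t = t ^ q ^ r - t := fun t => by
    simp [φ, he t]
  have hker : LinearMap.ker φ = Subalgebra.toSubmodule (⊥ : Subalgebra F K) := by
    ext x
    rw [LinearMap.mem_ker, Subalgebra.mem_toSubmodule, Algebra.mem_bot, hφ, sub_eq_zero]
    rw [key1]
    constructor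
    · exact fun hx => ⟨⟨x, hx⟩, rfl⟩
    · rintro ⟨c, rfl⟩; exact c.2
  have hkerrank : Module.finrank F (LinearMap.ker φ) = 1 := by
    rw [hker]; exact Subalgebra.finrank_bot
  have hrn := LinearMap.finrank_range_add_finrank_ker φ
  have hrange : Module.finrank F (LinearMap.range φ) = d - 1 := by
    rw [hkerrank] at hrn; omega
  -- the trace map
  haveI : Algebra.IsSeparable F K := inferInstance
  set T : K →ₗ[F] F := Algebra.trace F K with hT
  have hTrange : LinearMap.range T = ⊤ :=
    LinearMap.range_eq_top.mpr (Algebra.trace_surjective F K)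
  have hrnT := LinearMap.finrank_range_add_finrank_ker T
  rw [hTrange, finrank_top, Module.finrank_self] at hrnT
  have hTker : Module.finrank F (LinearMap.ker T) = d - 1 := by omega
  have hle : LinearMap.range φ ≤ LinearMap.ker T := by
    rintro y ⟨t, rfl⟩
    have hφt : φ t = e t - t := by simp [φ]
    rw [LinearMap.mem_ker, hφt, map_sub, Algebra.trace_eq_of_algEquiv e t, sub_self]
  have heq : LinearMap.range φ = LinearMap.ker T :=
    Submodule.eq_of_le_of_finrank_eq hle (by rw [hrange, hTker])
  refine ⟨fun t => by rw [sub_eq_zero]; exact key1 t, fun y => ?_⟩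
  constructor
  · rintro ⟨t, rfl⟩
    have hmem : t ^ q ^ r - t ∈ LinearMap.range φ := ⟨t, hφ t⟩
    rw [heq, LinearMap.mem_ker] at hmem
    exact hmem
  · intro hy
    have hmem : y ∈ LinearMap.range φ := by
      rw [heq, LinearMap.mem_ker]; exact hy
    obtain ⟨t, ht⟩ := hmem
    exact ⟨t, by rw [← hφ t]; exact ht⟩
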